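/- Let X be a locally finite median graph and let β, γ be two geodesic rays with β(0) = γ(0) such that the set of hyperplanes crossing both β and γ is infinite. Then there exists a geodesic ray σ with σ(0) = β(0) such that the set of hyperplanes crossing σ equals the set of hyperplanes crossing both β and γ. -/

import Mathlib

/-- The set of walls separating `u` from `v`. Walls model the Djoković–Winkler
classes (hyperplanes) of a median graph via a halfspace indicator `side`. -/
def sepSet {V W : Type*} (side : W → V → Bool) (u v : V) : Set W :=
  {w | side w u ≠ side w v}

/-- `γ : ℕ → V` is a (combinatorial) geodesic ray in `Γ`. -/
def IsGeodesicRay {V : Type*} (Γ : SimpleGraph V) (γ : ℕ → V) : Prop :=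
  (∀ t : ℕ, Γ.Adj (γ t) (γ (t + 1))) ∧ ∀ s t : ℕ, s ≤ t → Γ.dist (γ s) (γ t) = t - s

/-- The set of walls (hyperplanes) crossed by the ray `γ`. -/
def raysWalls {V W : Type*} (side : W → V → Bool) (γ : ℕ → V) : Set W :=
  {w | ∃ t : ℕ, side w (γ t) ≠ side w (γ (t + 1))}

/-- `m` is a median of `x`, `y`, `z`. -/
def IsMedianPt {V : Type*} (Γ : SimpleGraph V) (x y z m : V) : Prop :=
  Γ.dist x m + Γ.dist m y = Γ.dist x y ∧
    Γ.dist x m + Γ.dist m z = Γ.dist x z ∧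
    Γ.dist y m + Γ.dist m z = Γ.dist y z

/-- A median graph: any three vertices have a unique median. -/
def IsMedianGraph {V : Type*} (Γ : SimpleGraph V) : Prop :=
  ∀ x y z : V, ∃! m : V, IsMedianPt Γ x y z m

section Aux

variable {V W : Type*} {Γ : SimpleGraph V} {side : W → V → Bool}

lemma sep_self (u : V) : sepSet side u u = ∅ := by ext w; simp [sepSet]

lemma sep_delta (x u v : V) (w : W) :
    w ∈ sepSet side u v ↔ ¬ (w ∈ sepSet side x u ↔ w ∈ sepSet side x v) := by
  simp only [sepSet, Set.mem_setOf_eq]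
  cases hx : side w x <;> cases hu : side w u <;> cases hv : side w v <;> simp

lemma between_iff (hfin : ∀ u v : V, (sepSet side u v).Finite)
    (hdist : ∀ u v : V, Γ.dist u v = (sepSet side u v).ncard) (u m v : V) :
    Γ.dist u m + Γ.dist m v = Γ.dist u v ↔ sepSet side u m ⊆ sepSet side u v := by
  set A := sepSet side u m with hA
  set B := sepSet side u v with hB
  have hC : sepSet side m v = (A \ B) ∪ (B \ A) := by
    ext w
    have h := sep_delta (side := side) u m v w
    simp only [Set.mem_union, Set.mem_diff]
    rw [h]; tauto
  have hCcard : (sepSet side m v).ncard = (A \ B).ncard + (B \ A).ncard := by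
    rw [hC, Set.ncard_union_eq (Set.disjoint_left.mpr (fun a ha hb => ha.2 hb.1))
      ((hfin u m).diff) ((hfin u v).diff)]
  have hA1 : (A \ B).ncard + (A ∩ B).ncard = A.ncard := by
    rw [← Set.ncard_union_eq (Set.disjoint_left.mpr (fun a ha hb => ha.2 hb.2))
      ((hfin u m).diff) ((hfin u m).inter_of_left _)]
    congr 1
    ext w; simp only [Set.mem_union, Set.mem_diff, Set.mem_inter_iff]; tauto
  have hB1 : (B \ A).ncard + (A ∩ B).ncard = B.ncard := by
    rw [← Set.ncard_union_eq (Set.disjoint_left.mpr (fun a ha hb => ha.2 hb.1))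
      ((hfin u v).diff) ((hfin u m).inter_of_left _)]
    congr 1
    ext w; simp only [Set.mem_union, Set.mem_diff, Set.mem_inter_iff]; tauto
  constructor
  · intro h
    rw [hdist, hdist, hdist, hCcard, ← hA, ← hB] at h
    have hd1 : (A \ B).ncard = 0 := by omega
    have : A \ B = ∅ := (Set.ncard_eq_zero ((hfin u m).diff)).mp hd1
    exact Set.diff_eq_empty.mp this
  · intro hsub
    have hd1 : A \ B = ∅ := Set.diff_eq_empty.mpr hsub
    rw [hd1, Set.ncard_empty] at hA1 hCcard
    rw [hdist, hdist, hdist, hCcard, ← hA, ← hB]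
    omega

lemma ray_sep_mono (hfin : ∀ u v : V, (sepSet side u v).Finite)
    (hdist : ∀ u v : V, Γ.dist u v = (sepSet side u v).ncard)
    {β : ℕ → V} (hβ : IsGeodesicRay Γ β) {s t : ℕ} (hst : s ≤ t) :
    sepSet side (β 0) (β s) ⊆ sepSet side (β 0) (β t) := by
  rw [← between_iff hfin hdist]
  rw [hβ.2 0 s (Nat.zero_le _), hβ.2 s t hst, hβ.2 0 t (Nat.zero_le _)]
  omega

lemma raysWalls_eq_iUnion (β : ℕ → V) :
    raysWalls side β = ⋃ t, sepSet side (β 0) (β t) := by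
  ext w
  simp only [raysWalls, Set.mem_setOf_eq, Set.mem_iUnion]
  constructor
  · rintro ⟨t, ht⟩
    have hw : w ∈ sepSet side (β t) (β (t + 1)) := ht
    rw [sep_delta (β 0)] at hw
    by_cases h1 : w ∈ sepSet side (β 0) (β t)
    · exact ⟨t, h1⟩
    · exact ⟨t + 1, by tauto⟩
  · rintro ⟨t, ht⟩
    induction t with
    | zero => simp [sepSet] at ht
    | succ n ih =>
      by_cases hc : side w (β n) ≠ side w (β (n + 1))
      · exact ⟨n, hc⟩
      · push_neg at hc
        apply ih
        simp only [sepSet, Set.mem_setOf_eq] at ht ⊢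
        rw [hc]; exact ht

lemma median_sep (hfin : ∀ u v : V, (sepSet side u v).Finite)
    (hdist : ∀ u v : V, Γ.dist u v = (sepSet side u v).ncard)
    {x y z m : V} (hm : IsMedianPt Γ x y z m) :
    sepSet side x m = sepSet side x y ∩ sepSet side x z := by
  obtain ⟨h1, h2, h3⟩ := hm
  have hAB : sepSet side x m ⊆ sepSet side x y := (between_iff hfin hdist x m y).mp h1
  have hAC : sepSet side x m ⊆ sepSet side x z := (between_iff hfin hdist x m z).mp h2
  set A := sepSet side x m with hA
  set B := sepSet side x y with hB
  set C := sepSet side x z with hCdef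
  have hym : sepSet side y m = B \ A := by
    ext w
    have h := sep_delta (side := side) x y m w
    have hs := @hAB w
    simp only [Set.mem_diff]
    rw [h]; tauto
  have hmz : sepSet side m z = C \ A := by
    ext w
    have h := sep_delta (side := side) x m z w
    have hs := @hAC w
    simp only [Set.mem_diff]
    rw [h]; tauto
  have hyz : sepSet side y z = (B \ C) ∪ (C \ B) := by
    ext w
    have h := sep_delta (side := side) x y z w
    simp only [Set.mem_union, Set.mem_diff]
    rw [h]; tauto
  rw [hdist, hdist, hdist, hym, hmz, hyz] at h3
  have hXfin : ((B ∩ C) \ A).Finite := ((hfin x y).inter_of_left _).diff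
  have hBA : (B \ A).ncard = (B \ C).ncard + ((B ∩ C) \ A).ncard := by
    rw [← Set.ncard_union_eq (Set.disjoint_left.mpr (fun a ha hb => ha.2 hb.1.2))
      ((hfin x y).diff) hXfin]
    congr 1
    ext w
    have hs := @hAC w
    simp only [Set.mem_union, Set.mem_diff, Set.mem_inter_iff]; tauto
  have hCA : (C \ A).ncard = (C \ B).ncard + ((B ∩ C) \ A).ncard := by
    rw [← Set.ncard_union_eq (Set.disjoint_left.mpr (fun a ha hb => ha.2 hb.1.1))
      ((hfin x z).diff) hXfin]
    congr 1
    ext w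
    have hs := @hAB w
    simp only [Set.mem_union, Set.mem_diff, Set.mem_inter_iff]; tauto
  have hBC : ((B \ C) ∪ (C \ B)).ncard = (B \ C).ncard + (C \ B).ncard :=
    Set.ncard_union_eq (Set.disjoint_left.mpr (fun a ha hb => ha.2 hb.1))
      ((hfin x y).diff) ((hfin x z).diff)
  rw [hBA, hCA, hBC] at h3
  have hX0 : ((B ∩ C) \ A).ncard = 0 := by omega
  have hX : (B ∩ C) \ A = ∅ := (Set.ncard_eq_zero hXfin).mp hX0
  exact subset_antisymm (Set.subset_inter hAB hAC) (Set.diff_eq_empty.mp hX)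

lemma advance (hconn : Γ.Connected) (hfin : ∀ u v : V, (sepSet side u v).Finite)
    (hdist : ∀ u v : V, Γ.dist u v = (sepSet side u v).ncard) {x v u : V}
    (hsub : sepSet side x v ⊆ sepSet side x u)
    (hlt : (sepSet side x v).ncard < (sepSet side x u).ncard) :
    ∃ b : V, Γ.Adj v b ∧ sepSet side x v ⊆ sepSet side x b ∧
      sepSet side x b ⊆ sepSet side x u ∧
      (sepSet side x b).ncard = (sepSet side x v).ncard + 1 := by
  have hvu : sepSet side v u = sepSet side x u \ sepSet side x v := by
    ext w
    have h := sep_delta (side := side) x v u w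
    have hs := @hsub w
    simp only [Set.mem_diff]
    rw [h]; tauto
  have hdvu : Γ.dist v u ≠ 0 := by
    rw [hdist, hvu, Set.ncard_diff hsub (hfin x v)]
    have := Set.ncard_le_ncard hsub (hfin x u)
    omega
  obtain ⟨p, hp⟩ := hconn.exists_walk_length_eq_dist v u
  cases p with
  | nil => rw [SimpleGraph.Walk.length_nil] at hp; exact absurd hp.symm hdvu
  | cons hadj q =>
    rename_i b
    rw [SimpleGraph.Walk.length_cons] at hp
    have hqd : Γ.dist b u ≤ q.length := SimpleGraph.dist_le q
    have htri : Γ.dist v u ≤ Γ.dist v b + Γ.dist b u := hconn.dist_triangle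
    have hvb : Γ.dist v b = 1 := SimpleGraph.dist_eq_one_iff_adj.mpr hadj
    have hbu : Γ.dist v b + Γ.dist b u = Γ.dist v u := by omega
    have hsb : sepSet side v b ⊆ sepSet side v u := (between_iff hfin hdist v b u).mp hbu
    have hsb' : sepSet side v b ⊆ sepSet side x u \ sepSet side x v := by
      rw [← hvu]; exact hsb
    have hxb : sepSet side x b = sepSet side x v ∪ sepSet side v b := by
      ext w
      have h1 := sep_delta (side := side) x v b w
      have h2 := @hsb' w
      simp only [Set.mem_union, Set.mem_diff] at h2 ⊢
      rw [h1] at h2 ⊢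
      tauto
    have hdisj : Disjoint (sepSet side x v) (sepSet side v b) :=
      Set.disjoint_left.mpr fun w hw hw2 => (hsb' hw2).2 hw
    have hcb : (sepSet side v b).ncard = 1 := by rw [← hdist v b]; exact hvb
    refine ⟨b, hadj, ?_, ?_, ?_⟩
    · rw [hxb]; exact Set.subset_union_left
    · rw [hxb]; exact Set.union_subset hsub (hsb'.trans Set.diff_subset)
    · rw [hxb, Set.ncard_union_eq hdisj (hfin x v) (hfin v b), hcb]

end Aux

/-- in a locally finite median graph, if two geodesic rays `β, γ`
with the same initial vertex cross infinitely many common hyperplanes, then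
there is a geodesic ray `σ` from the same initial vertex crossing exactly the
hyperplanes crossed by both `β` and `γ`. -/
theorem common_walls_ray_exists {V W : Type*} (Γ : SimpleGraph V)
    (hconn : Γ.Connected) (hlf : ∀ v : V, (Γ.neighborSet v).Finite)
    (hmedian : IsMedianGraph Γ)
    (side : W → V → Bool)
    (hfin : ∀ u v : V, (sepSet side u v).Finite)
    (hdist : ∀ u v : V, Γ.dist u v = (sepSet side u v).ncard)
    (β γ : ℕ → V) (hβ : IsGeodesicRay Γ β) (hγ : IsGeodesicRay Γ γ)
    (h0 : β 0 = γ 0)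
    (hinf : (raysWalls side β ∩ raysWalls side γ).Infinite) :
    ∃ σ : ℕ → V, IsGeodesicRay Γ σ ∧ σ 0 = β 0 ∧
      raysWalls side σ = raysWalls side β ∩ raysWalls side γ := by
  classical
  set x0 := β 0 with hx0
  set A := raysWalls side β ∩ raysWalls side γ with hA
  -- medians
  have hmed : ∀ t : ℕ, ∃ m : V,
      sepSet side x0 m = sepSet side x0 (β t) ∩ sepSet side x0 (γ t) := by
    intro t
    obtain ⟨m, hm, -⟩ := hmedian x0 (β t) (γ t)
    exact ⟨m, median_sep hfin hdist hm⟩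
  choose m hm using hmed
  have hβmono : ∀ {s t : ℕ}, s ≤ t → sepSet side x0 (β s) ⊆ sepSet side x0 (β t) :=
    fun hst => ray_sep_mono hfin hdist hβ hst
  have hγmono : ∀ {s t : ℕ}, s ≤ t → sepSet side x0 (γ s) ⊆ sepSet side x0 (γ t) := by
    intro s t hst
    rw [h0]
    exact ray_sep_mono hfin hdist hγ hst
  have hAt_mono : ∀ {s t : ℕ}, s ≤ t → sepSet side x0 (m s) ⊆ sepSet side x0 (m t) := by
    intro s t hst
    rw [hm, hm]
    exact Set.inter_subset_inter (hβmono hst) (hγmono hst)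
  have hrw_b : raysWalls side β = ⋃ t, sepSet side x0 (β t) := raysWalls_eq_iUnion β
  have hrw_g : raysWalls side γ = ⋃ t, sepSet side x0 (γ t) := by
    rw [raysWalls_eq_iUnion γ, ← h0]
  have hAt_sub_A : ∀ t, sepSet side x0 (m t) ⊆ A := by
    intro t w hw
    rw [hm] at hw
    rw [hA, hrw_b, hrw_g]
    exact ⟨Set.mem_iUnion.mpr ⟨t, hw.1⟩, Set.mem_iUnion.mpr ⟨t, hw.2⟩⟩
  have hAeq : A = ⋃ t, sepSet side x0 (m t) := by
    apply subset_antisymm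
    · intro w hw
      rw [hA, hrw_b, hrw_g] at hw
      obtain ⟨t1, hwb⟩ := Set.mem_iUnion.mp hw.1
      obtain ⟨t2, hwg⟩ := Set.mem_iUnion.mp hw.2
      refine Set.mem_iUnion.mpr ⟨max t1 t2, ?_⟩
      rw [hm]
      exact ⟨hβmono (le_max_left t1 t2) hwb, hγmono (le_max_right t1 t2) hwg⟩
    · exact Set.iUnion_subset hAt_sub_A
  have hA_count : A.Countable := by
    rw [hAeq]
    exact Set.countable_iUnion (fun t => (hfin x0 (m t)).countable)
  obtain ⟨e, he⟩ := hA_count.exists_eq_range hinf.nonempty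
  have hfinsub : ∀ F : Set W, F.Finite → F ⊆ A → ∃ t, F ⊆ sepSet side x0 (m t) := by
    intro F hF hFA
    have hex : ∀ w ∈ F, ∃ t, w ∈ sepSet side x0 (m t) := by
      intro w hw
      have := hFA hw
      rw [hAeq] at this
      exact Set.mem_iUnion.mp this
    choose! f hf using hex
    obtain ⟨T, hT⟩ := (hF.image f).bddAbove
    exact ⟨T, fun w hw => hAt_mono (hT (Set.mem_image_of_mem f hw)) (hf w hw)⟩
  have hunb : ∀ n : ℕ, ∃ t, n ≤ (sepSet side x0 (m t)).ncard := by
    intro n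
    obtain ⟨F, hFA, hFfin, hFcard⟩ := hinf.exists_subset_ncard_eq n
    obtain ⟨t, hFt⟩ := hfinsub F hFfin hFA
    exact ⟨t, hFcard ▸ Set.ncard_le_ncard hFt (hfin _ _)⟩
  have key : ∀ (v : V) (j : ℕ), sepSet side x0 v ⊆ A →
      ∃ u : V, sepSet side x0 v ⊆ sepSet side x0 u ∧ sepSet side x0 u ⊆ A ∧
        (sepSet side x0 v).ncard < (sepSet side x0 u).ncard ∧ e j ∈ sepSet side x0 u := by
    intro v j hv
    have hej : e j ∈ A := by rw [he]; exact Set.mem_range_self j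
    obtain ⟨t1, ht1⟩ := hfinsub (insert (e j) (sepSet side x0 v)) ((hfin _ _).insert _)
      (Set.insert_subset hej hv)
    obtain ⟨t2, ht2⟩ := hunb ((sepSet side x0 v).ncard + 1)
    refine ⟨m (max t1 t2), ?_, hAt_sub_A _, ?_, ?_⟩
    · exact fun w hw => hAt_mono (le_max_left t1 t2) (ht1 (Set.mem_insert_of_mem _ hw))
    · have := Set.ncard_le_ncard (hAt_mono (le_max_right t1 t2)) (hfin _ _)
      omega
    · exact hAt_mono (le_max_left t1 t2) (ht1 (Set.mem_insert _ _))
  -- the state machine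
  let Inv : V × V × ℕ → Prop := fun p =>
    sepSet side x0 p.1 ⊆ sepSet side x0 p.2.1 ∧ sepSet side x0 p.2.1 ⊆ A ∧
      (sepSet side x0 p.1).ncard < (sepSet side x0 p.2.1).ncard ∧
      (∀ i < p.2.2, e i ∈ sepSet side x0 p.1) ∧ e p.2.2 ∈ sepSet side x0 p.2.1
  have stepEx : ∀ p : V × V × ℕ, Inv p → ∃ p' : V × V × ℕ, Inv p' ∧ Γ.Adj p.1 p'.1 ∧
      sepSet side x0 p.1 ⊆ sepSet side x0 p'.1 ∧
      (sepSet side x0 p'.1).ncard = (sepSet side x0 p.1).ncard + 1 ∧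
      ((p'.2.1 = p.2.1 ∧ p'.2.2 = p.2.2) ∨
        (p'.2.2 = p.2.2 + 1 ∧
          (sepSet side x0 p.1).ncard + 1 = (sepSet side x0 p.2.1).ncard)) := by
    rintro ⟨v, u, j⟩ ⟨h1, h2, h3, h4, h5⟩
    dsimp only at h1 h2 h3 h4 h5 ⊢
    obtain ⟨b, hadj, hvb, hbu, hcard⟩ := advance hconn hfin hdist h1 h3
    by_cases hlt : (sepSet side x0 b).ncard < (sepSet side x0 u).ncard
    · exact ⟨(b, u, j), ⟨hbu, h2, hlt, fun i hi => hvb (h4 i hi), h5⟩, hadj, hvb, hcard,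
        Or.inl ⟨rfl, rfl⟩⟩
    · have hble := Set.ncard_le_ncard hbu (hfin _ _)
      have hbeq : sepSet side x0 b = sepSet side x0 u :=
        Set.eq_of_subset_of_ncard_le hbu (le_of_not_gt hlt) (hfin _ _)
      obtain ⟨u', hu1, hu2, hu3, hu4⟩ := key b (j + 1) (by rw [hbeq]; exact h2)
      refine ⟨(b, u', j + 1), ⟨hu1, hu2, hu3, ?_, hu4⟩, hadj, hvb, hcard,
        Or.inr ⟨rfl, by
          show (sepSet side x0 v).ncard + 1 = (sepSet side x0 u).ncard
          omega⟩⟩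
      intro i hi
      rcases Nat.lt_succ_iff_lt_or_eq.mp hi with hi' | rfl
      · exact hvb (h4 i hi')
      · rw [hbeq]; exact h5
  have hempty : sepSet side x0 x0 = ∅ := sep_self x0
  obtain ⟨u0, hu01, hu02, hu03, hu04⟩ := key x0 0 (by rw [hempty]; exact Set.empty_subset A)
  have inv0 : Inv (x0, u0, 0) :=
    ⟨hu01, hu02, hu03, fun i hi => absurd hi (Nat.not_lt_zero i), hu04⟩
  let s : ℕ → {p : V × V × ℕ // Inv p} := fun n =>
    Nat.rec ⟨(x0, u0, 0), inv0⟩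
      (fun _ p => ⟨(stepEx p.1 p.2).choose, (stepEx p.1 p.2).choose_spec.1⟩) n
  have hstep : ∀ n : ℕ, Γ.Adj (s n).1.1 (s (n + 1)).1.1 ∧
      sepSet side x0 (s n).1.1 ⊆ sepSet side x0 (s (n + 1)).1.1 ∧
      (sepSet side x0 (s (n + 1)).1.1).ncard = (sepSet side x0 (s n).1.1).ncard + 1 ∧
      (((s (n + 1)).1.2.1 = (s n).1.2.1 ∧ (s (n + 1)).1.2.2 = (s n).1.2.2) ∨
        ((s (n + 1)).1.2.2 = (s n).1.2.2 + 1 ∧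
          (sepSet side x0 (s n).1.1).ncard + 1 = (sepSet side x0 (s n).1.2.1).ncard)) := by
    intro n
    have h := (stepEx (s n).1 (s n).2).choose_spec
    exact ⟨h.2.1, h.2.2.1, h.2.2.2.1, h.2.2.2.2⟩
  have hcardn : ∀ n : ℕ, (sepSet side x0 (s n).1.1).ncard = n := by
    intro n
    induction n with
    | zero =>
      show (sepSet side x0 x0).ncard = 0
      rw [hempty]; exact Set.ncard_empty W
    | succ k ih => rw [(hstep k).2.2.1, ih]
  have hmono : ∀ {a b : ℕ}, a ≤ b →
      sepSet side x0 (s a).1.1 ⊆ sepSet side x0 (s b).1.1 := by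
    intro a b hab
    induction b, hab using Nat.le_induction with
    | base => exact subset_rfl
    | succ n hn ih => exact ih.trans (hstep n).2.1
  have hsubA : ∀ n : ℕ, sepSet side x0 (s n).1.1 ⊆ A :=
    fun n => ((s n).2.1).trans (s n).2.2.1
  have hdista : ∀ a b : ℕ, a ≤ b → Γ.dist ((s a).1.1) ((s b).1.1) = b - a := by
    intro a b hab
    have hsab : sepSet side ((s a).1.1) ((s b).1.1) =
        sepSet side x0 (s b).1.1 \ sepSet side x0 (s a).1.1 := by
      ext w
      have h := sep_delta (side := side) x0 ((s a).1.1) ((s b).1.1) w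
      have h2 : w ∈ sepSet side x0 (s a).1.1 → w ∈ sepSet side x0 (s b).1.1 :=
        fun hw => hmono hab hw
      simp only [Set.mem_diff]
      rw [h]; tauto
    rw [hdist, hsab, Set.ncard_diff (hmono hab) (hfin _ _), hcardn, hcardn]
  -- unboundedness of the index component
  have hQ : ∀ r n : ℕ, (sepSet side x0 ((s n).1.2.1)).ncard = n + 1 + r →
      (s (n + 1 + r)).1.2.2 = (s n).1.2.2 + 1 := by
    intro r
    induction r with
    | zero =>
      intro n hg
      rcases (hstep n).2.2.2 with ⟨hu, hj⟩ | ⟨hj, _⟩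
      · exfalso
        have h3 := (s (n + 1)).2.2.2.1
        rw [hu, hg, hcardn (n + 1)] at h3
        omega
      · exact hj
    | succ r ih =>
      intro n hg
      rcases (hstep n).2.2.2 with ⟨hu, hj⟩ | ⟨hj, hc⟩
      · have hg' : (sepSet side x0 ((s (n + 1)).1.2.1)).ncard = (n + 1) + 1 + r := by
          rw [hu, hg]; omega
        have hthis := ih (n + 1) hg'
        have hidx : n + 1 + (r + 1) = n + 1 + 1 + r := by omega
        rw [hidx, hthis, hj]
      · exfalso
        have hcn := hcardn n
        omega
  have hjunb : ∀ J : ℕ, ∃ n, J ≤ (s n).1.2.2 := by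
    intro J
    induction J with
    | zero => exact ⟨0, Nat.zero_le _⟩
    | succ J ih =>
      obtain ⟨n, hn⟩ := ih
      have h3 := (s n).2.2.2.1
      have hcn := hcardn n
      have hg : (sepSet side x0 ((s n).1.2.1)).ncard =
          n + 1 + ((sepSet side x0 ((s n).1.2.1)).ncard - n - 1) := by omega
      have hq := hQ _ n hg
      exact ⟨n + 1 + ((sepSet side x0 ((s n).1.2.1)).ncard - n - 1), by omega⟩
  have hfair : ∀ k : ℕ, ∃ n, e k ∈ sepSet side x0 (s n).1.1 := by
    intro k
    obtain ⟨n, hn⟩ := hjunb (k + 1)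
    exact ⟨n, (s n).2.2.2.2.1 k (by omega)⟩
  -- assemble
  have hrwσ : raysWalls side (fun n => (s n).1.1) = ⋃ t, sepSet side x0 (s t).1.1 :=
    raysWalls_eq_iUnion _
  have hwalls : raysWalls side (fun n => (s n).1.1) = A := by
    rw [hrwσ]
    apply subset_antisymm
    · exact Set.iUnion_subset hsubA
    · intro w hw
      rw [he] at hw
      obtain ⟨k, hk⟩ := hw
      obtain ⟨n, hn⟩ := hfair k
      exact Set.mem_iUnion.mpr ⟨n, hk ▸ hn⟩
  exact ⟨fun n => (s n).1.1, ⟨fun t => (hstep t).1, hdista⟩, hx0.symm ▸ rfl, hwalls⟩
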